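/- Let ε > 0 and K* = max(K, ⌈1/ε⌉), and assume K* ≤ N. Define ŝ_i = 0 for all K* ≤ i ≤ N, and ŝ_i = ŝ_{i+1} + ((1[y_i = y_test] − 1[y_{i+1} = y_test])/K) · (min(K,i)/i) for 1 ≤ i ≤ K*−1. Then |ŝ_i − s_i| ≤ ε for every 1 ≤ i ≤ N, where s_i is the Shapley value of point i under the unweighted K-NN classification utility; moreover ŝ_i − ŝ_{i+1} = s_i − s_{i+1} for every 1 ≤ i ≤ K*−1. -/

import Mathlib

open Finset


lemma filter_sort_append (S : Finset ℕ) (i : ℕ) :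
    (S.sort (· ≤ ·)).filter (fun x => decide (x < i)) ++
      (S.sort (· ≤ ·)).filter (fun x => !decide (x < i)) = S.sort (· ≤ ·) := by
  set L := S.sort (· ≤ ·) with hL
  have hs : L.Pairwise (· ≤ ·) := Finset.pairwise_sort _ _
  refine List.Perm.eq_of_pairwise' ?_ hs (List.filter_append_perm _ L)
  rw [List.pairwise_append]
  refine ⟨hs.filter _, hs.filter _, ?_⟩
  intro x hx y hy
  have hx' := List.of_mem_filter hx
  have hy' := List.of_mem_filter hy
  simp only [decide_eq_true_eq, Bool.not_eq_true', decide_eq_false_iff_not] at hx' hy'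
  omega

lemma sort_insert_eq (S : Finset ℕ) (i : ℕ) (hi : i ∉ S) :
    (insert i S).sort (· ≤ ·) =
      (S.sort (· ≤ ·)).filter (fun x => decide (x < i)) ++
        i :: (S.sort (· ≤ ·)).filter (fun x => !decide (x < i)) := by
  set L := S.sort (· ≤ ·) with hL
  have hs : L.Pairwise (· ≤ ·) := Finset.pairwise_sort _ _
  have hperm : List.Perm (L.filter (fun x => decide (x < i)) ++
      i :: L.filter (fun x => !decide (x < i))) ((insert i S).sort (· ≤ ·)) := by
    refine List.Perm.trans List.perm_middle ?_
    refine List.Perm.trans ((List.filter_append_perm _ L).cons i) ?_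
    rw [← Multiset.coe_eq_coe]
    rw [Finset.sort_eq]
    rw [Finset.insert_val, Multiset.ndinsert_of_notMem hi]
    rw [← Finset.sort_eq S (· ≤ ·)]
    rfl
  refine (List.Perm.eq_of_pairwise' ?_ (Finset.pairwise_sort _ _) hperm).symm
  rw [List.pairwise_append]
  refine ⟨hs.filter _, ?_, ?_⟩
  · rw [List.pairwise_cons]
    refine ⟨?_, hs.filter _⟩
    intro y hy
    have := List.of_mem_filter hy
    simp only [Bool.not_eq_true', decide_eq_false_iff_not] at this
    omega
  · intro x hx y hy
    have hx' := List.of_mem_filter hx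
    simp only [decide_eq_true_eq] at hx'
    rcases List.mem_cons.mp hy with rfl | hy
    · omega
    · have := List.of_mem_filter hy
      simp only [Bool.not_eq_true', decide_eq_false_iff_not] at this
      omega

lemma length_filter_sort (S : Finset ℕ) (i : ℕ) :
    ((S.sort (· ≤ ·)).filter (fun x => decide (x < i))).length
      = (S.filter (· < i)).card := by
  have h1 : (S.filter (· < i)).card = Multiset.card (S.1.filter (· < i)) := by
    rfl
  rw [h1, ← Finset.sort_eq S (· ≤ ·), Multiset.filter_coe]
  simp


lemma sum_getD_insert (χ : ℕ → ℝ) (L₁ L₂ : List ℕ) (i : ℕ) : ∀ n : ℕ,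
    ∑ k ∈ range n, χ ((L₁ ++ i :: L₂).getD k 0) =
      if L₁.length < n then χ i + ∑ k ∈ range (n-1), χ ((L₁ ++ L₂).getD k 0)
      else ∑ k ∈ range n, χ ((L₁ ++ L₂).getD k 0) := by
  intro n
  induction n with
  | zero => simp
  | succ n ih =>
    rw [Finset.sum_range_succ, ih]
    rcases lt_trichotomy L₁.length n with h | h | h
    · rw [if_pos h, if_pos (by omega)]
      have hterm : (L₁ ++ i :: L₂).getD n 0 = (L₁ ++ L₂).getD (n-1) 0 := by
        rw [List.getD_append_right _ _ _ _ (le_of_lt h),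
            List.getD_append_right _ _ _ _ (by omega : L₁.length ≤ n - 1)]
        have : n - L₁.length = (n - 1 - L₁.length) + 1 := by omega
        rw [this]
        rfl
      rw [hterm]
      have : n + 1 - 1 = (n - 1) + 1 := by omega
      rw [this, Finset.sum_range_succ]
      ring
    · rw [if_neg (by omega), if_pos (by omega)]
      have hterm : (L₁ ++ i :: L₂).getD n 0 = i := by
        rw [List.getD_append_right _ _ _ _ h.le, ← h]
        simp
      rw [hterm]
      simp only [Nat.add_sub_cancel]
      ring
    · rw [if_neg (by omega), if_neg (by omega)]
      have hterm : (L₁ ++ i :: L₂).getD n 0 = (L₁ ++ L₂).getD n 0 := by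
        rw [List.getD_append _ _ _ _ h, List.getD_append _ _ _ _ h]
      rw [hterm, Finset.sum_range_succ]


lemma nat_choose_id (a m : ℕ) :
    (a + 1) * a.choose m * ((a+2).choose (m+1)) =
      (a + 2) * ((a+1).choose m) * ((a+1).choose (m+1)) := by
  have h1 : (a + 1) * a.choose m = (a+1).choose (m+1) * (m+1) :=
    Nat.add_one_mul_choose_eq a m
  have h2 : (a + 2) * (a+1).choose m = (a+2).choose (m+1) * (m+1) :=
    Nat.add_one_mul_choose_eq (a+1) m
  calc (a + 1) * a.choose m * ((a+2).choose (m+1))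
      = (a+1).choose (m+1) * (m+1) * ((a+2).choose (m+1)) := by rw [h1]
    _ = (a + 2) * ((a+1).choose m) * ((a+1).choose (m+1)) := by rw [h2]; ring

lemma choose_split (b : ℕ) (g : ℕ → ℝ) :
    ∑ j ∈ range (b+2), ((b+1).choose j : ℝ) * g j =
      ∑ j ∈ range (b+1), (b.choose j : ℝ) * g j +
      ∑ j ∈ range (b+1), (b.choose j : ℝ) * g (j+1) := by
  rw [Finset.sum_range_succ' _ (b+1)]
  have h1 : ∀ j ∈ range (b+1), ((b+1).choose (j+1) : ℝ) * g (j+1) =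
      (b.choose j : ℝ) * g (j+1) + (b.choose (j+1) : ℝ) * g (j+1) := by
    intro j _
    rw [Nat.choose_succ_succ]
    push_cast
    ring
  rw [Finset.sum_congr rfl h1, Finset.sum_add_distrib]
  have h2 : ∑ j ∈ range (b+1), (b.choose (j+1):ℝ) * g (j+1) =
      (∑ j ∈ range (b+2), (b.choose j:ℝ) * g j) - (b.choose 0 : ℝ) * g 0 := by
    rw [Finset.sum_range_succ' (fun j => (b.choose j : ℝ) * g j) (b+1)]
    ring
  rw [h2, Finset.sum_range_succ (fun j => (b.choose j : ℝ) * g j) (b+1)]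
  simp only [Nat.choose_succ_self, Nat.cast_zero, zero_mul, add_zero,
    Nat.choose_zero_right, Nat.cast_one, one_mul]
  ring

lemma star : ∀ (b a m : ℕ), m ≤ a →
    ∑ j ∈ range (b+1), (b.choose j : ℝ) / ((a+b).choose (m+j)) =
      ((a:ℝ) + b + 1) / (((a:ℝ)+1) * (a.choose m)) := by
  intro b
  induction b with
  | zero =>
    intro a m hm
    have h : (a.choose m : ℝ) ≠ 0 := by
      exact_mod_cast (Nat.choose_pos hm).ne'
    simp only [Nat.cast_zero, add_zero, zero_add, Finset.sum_range_one,
      Nat.choose_self, Nat.choose_zero_right, Nat.cast_one]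
    rw [one_div]
    field_simp
  | succ b ih =>
    intro a m hm
    have eab : a + (b+1) = (a+1) + b := by omega
    have hsplit := choose_split b (fun j => 1 / (((a+1)+b).choose (m+j) : ℝ))
    simp only [mul_one_div] at hsplit
    have erw : ∀ j ∈ range (b+1+1), ((b+1).choose j : ℝ) / ((a+(b+1)).choose (m+j))
        = ((b+1).choose j : ℝ) / (((a+1)+b).choose (m+j)) := by
      intro j _; rw [eab]
    rw [Finset.sum_congr rfl erw]
    rw [show b+1+1 = b+2 from rfl, hsplit]
    have e2 : ∀ j ∈ range (b+1), (b.choose j : ℝ) / (((a+1)+b).choose (m+(j+1)))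
        = (b.choose j : ℝ) / (((a+1)+b).choose ((m+1)+j)) := by
      intro j _; rw [show m+(j+1) = (m+1)+j from by omega]
    rw [Finset.sum_congr rfl e2, ih (a+1) m (by omega), ih (a+1) (m+1) (by omega)]
    have hA : (0:ℝ) < ((a+1).choose m : ℝ) := by
      exact_mod_cast Nat.choose_pos (by omega)
    have hB : (0:ℝ) < ((a+1).choose (m+1) : ℝ) := by
      exact_mod_cast Nat.choose_pos (by omega)
    have hC : (0:ℝ) < (a.choose m : ℝ) := by
      exact_mod_cast Nat.choose_pos hm
    have hP : (0:ℝ) < ((a+2).choose (m+1) : ℝ) := by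
      exact_mod_cast Nat.choose_pos (by omega)
    have f1 : ((a:ℝ) + 1) * (a.choose m) * ((a+2).choose (m+1)) =
        ((a:ℝ) + 2) * ((a+1).choose m) * ((a+1).choose (m+1)) := by
      exact_mod_cast nat_choose_id a m
    have f2 : ((a+2).choose (m+1) : ℝ) = ((a+1).choose m : ℝ) + ((a+1).choose (m+1) : ℝ) := by
      exact_mod_cast Nat.choose_succ_succ (a+1) m
    push_cast
    rw [div_add_div _ _ (by positivity) (by positivity),
      div_eq_div_iff (by positivity) (by positivity)]
    linear_combination (-((a:ℝ)+b+2) * ((a:ℝ)+2) * ((a:ℝ)+1) * ((a.choose m : ℝ))) * f2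
      + (((a:ℝ)+b+2) * ((a:ℝ)+2)) * f1


lemma Bsum (N i m : ℕ) (h1 : 1 ≤ i) (hiN : i ≤ N) (hm : m ≤ i - 1) :
    ∑ j ∈ range (N-i+1), ((N-i).choose j : ℝ) / ((N-1).choose (m+j)) =
      (N:ℝ) / ((i:ℝ) * ((i-1).choose m)) := by
  have h := star (N-i) (i-1) m hm
  rw [show (i-1) + (N-i) = N-1 from by omega] at h
  rw [h, Nat.cast_sub h1, Nat.cast_sub hiN]
  push_cast
  rw [show (i:ℝ) - 1 + ((N:ℝ) - i) + 1 = (N:ℝ) from by ring,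
      show (i:ℝ) - 1 + 1 = (i:ℝ) from by ring]

lemma Dsum (N i m : ℕ) (h1 : 1 ≤ i) (hiN : i + 1 ≤ N) (hm : m ≤ i - 1) :
    ∑ j ∈ range (N-i-1+1), ((N-i-1).choose j : ℝ) *
      (1/((N-1).choose (m+j) : ℝ) + 1/((N-1).choose (m+j+1) : ℝ)) =
      (N:ℝ) / ((i:ℝ) * ((i-1).choose m)) := by
  have hs1 := star (N-i-1) i m (by omega)
  rw [show i + (N-i-1) = N-1 from by omega] at hs1
  have hs2 := star (N-i-1) i (m+1) (by omega)
  rw [show i + (N-i-1) = N-1 from by omega] at hs2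
  have e2 : ∀ j ∈ range (N-i-1+1), ((N-i-1).choose j : ℝ) / ((N-1).choose ((m+1)+j))
      = ((N-i-1).choose j : ℝ) / ((N-1).choose (m+j+1)) := by
    intro j _; rw [show (m+1)+j = m+j+1 from by omega]
  rw [Finset.sum_congr rfl e2] at hs2
  have hsum : ∑ j ∈ range (N-i-1+1), ((N-i-1).choose j : ℝ) *
      (1/((N-1).choose (m+j) : ℝ) + 1/((N-1).choose (m+j+1) : ℝ)) =
      (∑ j ∈ range (N-i-1+1), ((N-i-1).choose j : ℝ) / ((N-1).choose (m+j)))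
      + (∑ j ∈ range (N-i-1+1), ((N-i-1).choose j : ℝ) / ((N-1).choose (m+j+1))) := by
    rw [← Finset.sum_add_distrib]
    refine Finset.sum_congr rfl fun j _ => ?_
    rw [mul_add, mul_one_div, mul_one_div]
  rw [hsum, hs1, hs2]
  have hA : (0:ℝ) < (i.choose m : ℝ) := by
    exact_mod_cast Nat.choose_pos (by omega)
  have hB : (0:ℝ) < (i.choose (m+1) : ℝ) := by
    exact_mod_cast Nat.choose_pos (by omega)
  have hC : (0:ℝ) < ((i-1).choose m : ℝ) := by
    exact_mod_cast Nat.choose_pos hm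
  have hi : (0:ℝ) < (i:ℝ) := by exact_mod_cast h1
  have n1 : i * ((i-1).choose m) * ((i+1).choose (m+1)) =
      (i+1) * (i.choose m) * (i.choose (m+1)) := by
    have := nat_choose_id (i-1) m
    rw [show i-1+1 = i from by omega, show i-1+2 = i+1 from by omega] at this
    exact this
  have f1 : (i:ℝ) * (((i-1).choose m : ℝ)) * (((i+1).choose (m+1) : ℝ)) =
      ((i:ℝ)+1) * ((i.choose m : ℝ)) * ((i.choose (m+1) : ℝ)) := by
    exact_mod_cast n1
  have f2 : (((i+1).choose (m+1) : ℕ) : ℝ) = ((i.choose m : ℝ)) + ((i.choose (m+1) : ℝ)) := by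
    exact_mod_cast Nat.choose_succ_succ i m
  have cN : ((N-i-1 : ℕ) : ℝ) = (N:ℝ) - i - 1 := by
    have : ((N - i - 1 : ℕ) : ℝ) = ((N : ℕ) : ℝ) - ((i+1 : ℕ) : ℝ) := by
      rw [← Nat.cast_sub hiN, Nat.sub_sub]
    rw [this]; push_cast; ring
  rw [cN]
  rw [div_add_div _ _ (by positivity) (by positivity),
    div_eq_div_iff (by positivity) (by positivity)]
  linear_combination (-(N:ℝ) * ((i:ℝ)+1) * (i:ℝ) * (((i-1).choose m : ℝ))) * f2
    + ((N:ℝ) * ((i:ℝ)+1)) * f1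

lemma sum_powerset_union (B : Finset ℕ) : ∀ (A : Finset ℕ) (f : Finset ℕ → ℝ),
    Disjoint B A →
    ∑ S ∈ (B ∪ A).powerset, f S = ∑ T ∈ B.powerset, ∑ U ∈ A.powerset, f (T ∪ U) := by
  intro A
  induction A using Finset.induction_on with
  | empty => intro f h; simp
  | @insert a A ha ih =>
    intro f h
    have hd : Disjoint B A := h.mono_right (Finset.subset_insert a A)
    have haB : a ∉ B := fun hb => (Finset.disjoint_left.mp h hb) (Finset.mem_insert_self a A)
    have haBA : a ∉ B ∪ A := by simp [haB, ha]
    rw [show B ∪ insert a A = insert a (B ∪ A) from by rw [Finset.union_insert]]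
    rw [Finset.sum_powerset_insert haBA, ih f hd, ih (fun t => f (insert a t)) hd]
    rw [← Finset.sum_add_distrib]
    refine Finset.sum_congr rfl fun T hT => ?_
    rw [Finset.sum_powerset_insert ha]
    congr 1
    refine Finset.sum_congr rfl fun U hU => ?_
    rw [Finset.union_insert]

/-- The Shapley value of player `i` in the cooperative game with player set `P`
and utility function `ν`. -/
noncomputable def shapley (P : Finset ℕ) (ν : Finset ℕ → ℝ) (i : ℕ) : ℝ :=
  (1 / (P.card : ℝ)) * ∑ S ∈ (P.erase i).powerset,
    (1 / ((P.card - 1).choose S.card : ℝ)) * (ν (insert i S) - ν S)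

/-- The unweighted K-NN classification utility: training points are sorted by
increasing distance to the test point, so the k-th nearest neighbor within `S`
is the k-th smallest element of `S` (given by the sorted list of `S`). -/
noncomputable def knnUtil (K : ℕ) (y : ℕ → ℕ) (ytest : ℕ) (S : Finset ℕ) : ℝ :=
  (1 / (K : ℝ)) * ∑ k ∈ Finset.range (min K S.card),
    if y ((S.sort (· ≤ ·)).getD k 0) = ytest then (1 : ℝ) else 0

lemma knnUtil_pair (K : ℕ) (y : ℕ → ℕ) (ytest : ℕ) (S : Finset ℕ) (i : ℕ)
    (hi : i ∉ S) (hi1 : i + 1 ∉ S) :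
    knnUtil K y ytest (insert i S) - knnUtil K y ytest (insert (i+1) S) =
      if (S.filter (· < i)).card < K then
        ((if y i = ytest then (1:ℝ) else 0) - (if y (i+1) = ytest then (1:ℝ) else 0)) / K
      else 0 := by
  set χ : ℕ → ℝ := fun j => if y j = ytest then (1:ℝ) else 0 with hχ
  set L := S.sort (· ≤ ·) with hL
  set L₁ := L.filter (fun x => decide (x < i)) with hL1
  set L₂ := L.filter (fun x => !decide (x < i)) with hL2
  have hdec : ∀ x ∈ L, decide (x < i + 1) = decide (x < i) := by
    intro x hx
    have hxS : x ∈ S := (Finset.mem_sort _).mp hx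
    have : x ≠ i := fun h => hi (h ▸ hxS)
    simp only [decide_eq_decide]
    omega
  have hfeq1 : L.filter (fun x => decide (x < i+1)) = L₁ :=
    List.filter_congr hdec
  have hfeq2 : L.filter (fun x => !decide (x < i+1)) = L₂ :=
    List.filter_congr (fun x hx => by rw [hdec x hx])
  have hcard : (insert i S).card = S.card + 1 := Finset.card_insert_of_notMem hi
  have hcard1 : (insert (i+1) S).card = S.card + 1 := Finset.card_insert_of_notMem hi1
  have hblen : L₁.length = (S.filter (· < i)).card := length_filter_sort S i
  have hble : (S.filter (· < i)).card ≤ S.card := Finset.card_filter_le _ _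
  rw [knnUtil, knnUtil, hcard, hcard1, sort_insert_eq S i hi, sort_insert_eq S (i+1) hi1]
  rw [hfeq1, hfeq2, ← hL, ← hL1, ← hL2]
  have h1 := sum_getD_insert χ L₁ L₂ i (min K (S.card + 1))
  have h2 := sum_getD_insert χ L₁ L₂ (i+1) (min K (S.card + 1))
  simp only [hχ] at h1 h2
  by_cases hb : (S.filter (· < i)).card < K
  · rw [if_pos (by omega : L₁.length < min K (S.card + 1))] at h1 h2
    rw [h1, h2, if_pos hb]
    ring
  · rw [if_neg (by omega : ¬ L₁.length < min K (S.card + 1))] at h1 h2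
    rw [h1, h2, if_neg hb]
    ring

lemma knnUtil_marginal (K : ℕ) (y : ℕ → ℕ) (ytest : ℕ) (S : Finset ℕ) (i : ℕ)
    (hi : i ∉ S) :
    |knnUtil K y ytest (insert i S) - knnUtil K y ytest S| ≤
      (if (S.filter (· < i)).card < K then 1 else 0) / K := by
  set χ : ℕ → ℝ := fun j => if y j = ytest then (1:ℝ) else 0 with hχ
  have hχ01 : ∀ j, |χ j| ≤ 1 := by
    intro j; rw [hχ]; dsimp only; split <;> norm_num
  have habs : ∀ d : ℝ, |d| ≤ 1 → |(1/(K:ℝ)) * d| ≤ 1 / K := by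
    intro d hd
    rw [abs_mul, abs_of_nonneg (by positivity : (0:ℝ) ≤ 1/(K:ℝ))]
    calc (1/(K:ℝ)) * |d| ≤ (1/(K:ℝ)) * 1 :=
          mul_le_mul_of_nonneg_left hd (by positivity)
      _ = 1 / K := by ring
  set L := S.sort (· ≤ ·) with hL
  set L₁ := L.filter (fun x => decide (x < i)) with hL1
  set L₂ := L.filter (fun x => !decide (x < i)) with hL2
  have hcard : (insert i S).card = S.card + 1 := Finset.card_insert_of_notMem hi
  have hblen : L₁.length = (S.filter (· < i)).card := length_filter_sort S i
  have hble : (S.filter (· < i)).card ≤ S.card := Finset.card_filter_le _ _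
  have happ : L₁ ++ L₂ = L := filter_sort_append S i
  rw [knnUtil, knnUtil, hcard, sort_insert_eq S i hi, ← hL, ← hL1, ← hL2]
  have h1 := sum_getD_insert χ L₁ L₂ i (min K (S.card + 1))
  rw [happ] at h1
  simp only [hχ] at h1
  by_cases hb : (S.filter (· < i)).card < K
  · rw [if_pos (by omega : L₁.length < min K (S.card + 1))] at h1
    rw [h1, if_pos hb]
    by_cases hc : S.card < K
    · have e1 : min K (S.card + 1) - 1 = S.card := by omega
      have e2 : min K S.card = S.card := by omega
      rw [e1, e2, ← mul_sub]
      have hd : (if y i = ytest then (1:ℝ) else 0) +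
          (∑ k ∈ range S.card, if y (L.getD k 0) = ytest then (1:ℝ) else 0) -
          (∑ k ∈ range S.card, if y (L.getD k 0) = ytest then (1:ℝ) else 0) = χ i := by
        rw [hχ]; ring
      rw [hd]
      exact habs _ (hχ01 i)
    · obtain ⟨k, rfl⟩ : ∃ k, K = k + 1 := ⟨K - 1, by omega⟩
      have e1 : min (k+1) (S.card + 1) - 1 = k := by omega
      have e2 : min (k+1) S.card = k + 1 := by omega
      rw [e1, e2, Finset.sum_range_succ, ← mul_sub]
      have hd : (if y i = ytest then (1:ℝ) else 0) +
          (∑ x ∈ range k, if y (L.getD x 0) = ytest then (1:ℝ) else 0) -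
          ((∑ x ∈ range k, if y (L.getD x 0) = ytest then (1:ℝ) else 0) +
            (if y (L.getD k 0) = ytest then (1:ℝ) else 0)) = χ i - χ (L.getD k 0) := by
        rw [hχ]; ring
      rw [hd]
      refine habs _ ?_
      rw [hχ]
      dsimp only
      split <;> split <;> norm_num
  · rw [if_neg (by omega : ¬ L₁.length < min K (S.card + 1))] at h1
    rw [h1, if_neg hb]
    have e : min (K) (S.card + 1) = min K S.card := by omega
    rw [e, ← mul_sub, sub_self, mul_zero, abs_zero]
    positivity

lemma min_count (i K : ℕ) (c : ℝ) :
    ∑ m ∈ range i, (if m < K then c else 0) = ((min i K : ℕ) : ℝ) * c := by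
  rw [← Finset.sum_filter]
  rw [show (range i).filter (· < K) = range (min i K) from by
    ext x; simp only [Finset.mem_range, Finset.mem_filter]; omega]
  rw [Finset.sum_const, Finset.card_range, nsmul_eq_mul]

lemma shapley_bound (N K : ℕ) (hK : 1 ≤ K) (y : ℕ → ℕ) (ytest : ℕ) (i : ℕ)
    (h1 : 1 ≤ i) (hiN : i ≤ N) :
    |shapley (Finset.Icc 1 N) (knnUtil K y ytest) i| ≤
      ((min K i : ℕ) : ℝ) / ((K:ℝ) * (i:ℝ)) := by
  set ν := knnUtil K y ytest with hν
  have hPcard : (Finset.Icc 1 N).card = N := by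
    rw [Nat.card_Icc]; omega
  set B := Finset.Icc 1 (i-1) with hB
  set A := Finset.Icc (i+1) N with hA
  have hBA : Disjoint B A := by
    rw [Finset.disjoint_left]
    intro x hx hx'
    rw [hB, Finset.mem_Icc] at hx
    rw [hA, Finset.mem_Icc] at hx'
    omega
  have hE : (Finset.Icc 1 N).erase i = B ∪ A := by
    ext x
    simp only [Finset.mem_erase, Finset.mem_Icc, Finset.mem_union, hB, hA]
    omega
  have hBcard : B.card = i - 1 := by rw [hB, Nat.card_Icc]; omega
  have hAcard : A.card = N - i := by rw [hA, Nat.card_Icc]; omega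
  rw [shapley, hPcard, hE]
  rw [abs_mul, abs_of_nonneg (by positivity : (0:ℝ) ≤ 1/(N:ℝ))]
  have step1 : |∑ S ∈ (B ∪ A).powerset, (1 / ((N - 1).choose S.card : ℝ)) *
      (ν (insert i S) - ν S)| ≤
      ∑ S ∈ (B ∪ A).powerset, (1 / ((N - 1).choose S.card : ℝ)) *
        ((if (S.filter (· < i)).card < K then (1:ℝ) else 0) / K) := by
    refine (Finset.abs_sum_le_sum_abs _ _).trans (Finset.sum_le_sum ?_)
    intro S hS
    rw [Finset.mem_powerset] at hS
    have hiS : i ∉ S := by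
      intro hx
      have := hS hx
      rw [Finset.mem_union, hB, hA, Finset.mem_Icc, Finset.mem_Icc] at this
      omega
    rw [abs_mul, abs_of_nonneg (by positivity : (0:ℝ) ≤ 1/(((N-1).choose S.card : ℕ):ℝ))]
    exact mul_le_mul_of_nonneg_left (knnUtil_marginal K y ytest S i hiS) (by positivity)
  have step2 : ∑ S ∈ (B ∪ A).powerset, (1 / ((N - 1).choose S.card : ℝ)) *
      ((if (S.filter (· < i)).card < K then (1:ℝ) else 0) / K) =
      ((min i K : ℕ) : ℝ) * ((N:ℝ) / ((i:ℝ) * K)) := by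
    rw [sum_powerset_union B A _ hBA]
    have inner : ∀ T ∈ B.powerset, ∑ U ∈ A.powerset,
        (1 / ((N - 1).choose (T ∪ U).card : ℝ)) *
          ((if ((T ∪ U).filter (· < i)).card < K then (1:ℝ) else 0) / K) =
        (if T.card < K then (1:ℝ) else 0) / K * ((N:ℝ) / ((i:ℝ) * ((i-1).choose T.card))) := by
      intro T hT
      rw [Finset.mem_powerset] at hT
      have hTi : ∀ x ∈ T, x < i := by
        intro x hx
        have := hT hx
        rw [hB, Finset.mem_Icc] at this
        omega
      have hcongr : ∀ U ∈ A.powerset,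
          (1 / ((N - 1).choose (T ∪ U).card : ℝ)) *
            ((if ((T ∪ U).filter (· < i)).card < K then (1:ℝ) else 0) / K) =
          (1 / ((N - 1).choose (T.card + U.card) : ℝ)) *
            ((if T.card < K then (1:ℝ) else 0) / K) := by
        intro U hU
        rw [Finset.mem_powerset] at hU
        have hUi : ∀ x ∈ U, i < x := by
          intro x hx
          have := hU hx
          rw [hA, Finset.mem_Icc] at this
          omega
        have hdTU : Disjoint T U := hBA.mono hT hU
        have hcard : (T ∪ U).card = T.card + U.card := Finset.card_union_of_disjoint hdTU
        have hfilt : (T ∪ U).filter (· < i) = T := by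
          ext x
          simp only [Finset.mem_filter, Finset.mem_union]
          constructor
          · rintro ⟨hx | hx, hlt⟩
            · exact hx
            · exact absurd hlt (by have := hUi x hx; omega)
          · intro hx
            exact ⟨Or.inl hx, hTi x hx⟩
        rw [hcard, hfilt]
      rw [Finset.sum_congr rfl hcongr]
      have := Finset.sum_powerset_apply_card
        (fun j => (1 / ((N - 1).choose (T.card + j) : ℝ)) *
          ((if T.card < K then (1:ℝ) else 0) / K)) (x := A)
      rw [this, hAcard]
      have : ∀ j ∈ range (N - i + 1), ((N-i).choose j) •
          ((1 / ((N - 1).choose (T.card + j) : ℝ)) * ((if T.card < K then (1:ℝ) else 0) / K)) =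
          (((N-i).choose j : ℝ) / ((N - 1).choose (T.card + j))) * ((if T.card < K then (1:ℝ) else 0) / K) := by
        intro j _
        rw [nsmul_eq_mul]
        ring
      rw [Finset.sum_congr rfl this, ← Finset.sum_mul]
      rw [Bsum N i T.card h1 hiN (by
        have := Finset.card_le_card hT
        omega)]
      ring
    rw [Finset.sum_congr rfl inner]
    have := Finset.sum_powerset_apply_card
      (fun m => (if m < K then (1:ℝ) else 0) / K * ((N:ℝ) / ((i:ℝ) * ((i-1).choose m)))) (x := B)
    rw [this, hBcard]
    have hrw : ∀ m ∈ range (i-1+1), ((i-1).choose m) •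
        ((if m < K then (1:ℝ) else 0) / K * ((N:ℝ) / ((i:ℝ) * ((i-1).choose m)))) =
        (if m < K then (N:ℝ)/((i:ℝ)*K) else 0) := by
      intro m hm
      rw [Finset.mem_range] at hm
      have hpos : (0:ℝ) < ((i-1).choose m : ℝ) := by
        exact_mod_cast Nat.choose_pos (by omega)
      rw [nsmul_eq_mul]
      by_cases h : m < K
      · rw [if_pos h, if_pos h]
        field_simp
      · rw [if_neg h, if_neg h]
        ring
    rw [Finset.sum_congr rfl hrw, show i - 1 + 1 = i from by omega, min_count]
  calc (1/(N:ℝ)) * |∑ S ∈ (B ∪ A).powerset, (1 / ((N - 1).choose S.card : ℝ)) *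
      (ν (insert i S) - ν S)|
      ≤ (1/(N:ℝ)) * (((min i K : ℕ) : ℝ) * ((N:ℝ) / ((i:ℝ) * K))) := by
        refine mul_le_mul_of_nonneg_left ?_ (by positivity)
        rw [← step2]; exact step1
    _ = ((min K i : ℕ) : ℝ) / ((K:ℝ) * (i:ℝ)) := by
        have hN : (0:ℝ) < (N:ℝ) := by exact_mod_cast (by omega : 0 < N)
        have hi : (0:ℝ) < (i:ℝ) := by exact_mod_cast h1
        have hKp : (0:ℝ) < (K:ℝ) := by exact_mod_cast hK
        rw [Nat.min_comm i K]
        set c := ((K ⊓ i : ℕ) : ℝ) with hc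
        have e : (1:ℝ)/N * (c * ((N:ℝ)/((i:ℝ)*K))) = c * ((N:ℝ)/N) * (1/((i:ℝ)*K)) := by
          ring
        rw [e, div_self hN.ne', mul_one, mul_one_div, mul_comm (i:ℝ) (K:ℝ)]

lemma shapley_diff (N K : ℕ) (hK : 1 ≤ K) (y : ℕ → ℕ) (ytest : ℕ) (i : ℕ)
    (h1 : 1 ≤ i) (hiN : i + 1 ≤ N) :
    shapley (Finset.Icc 1 N) (knnUtil K y ytest) i -
      shapley (Finset.Icc 1 N) (knnUtil K y ytest) (i+1) =
      ((if y i = ytest then (1:ℝ) else 0) - (if y (i+1) = ytest then (1:ℝ) else 0)) / K *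
        (((min K i : ℕ) : ℝ) / i) := by
  set ν := knnUtil K y ytest with hν
  set dχ := ((if y i = ytest then (1:ℝ) else 0) - (if y (i+1) = ytest then (1:ℝ) else 0))
    with hdχ
  have hPcard : (Finset.Icc 1 N).card = N := by rw [Nat.card_Icc]; omega
  set B := Finset.Icc 1 (i-1) with hB
  set A := Finset.Icc (i+2) N with hA
  set Q := B ∪ A with hQ
  have hBA : Disjoint B A := by
    rw [Finset.disjoint_left]
    intro x hx hx'
    rw [hB, Finset.mem_Icc] at hx
    rw [hA, Finset.mem_Icc] at hx'
    omega
  have hQi : i ∉ Q := by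
    rw [hQ, Finset.mem_union, hB, hA, Finset.mem_Icc, Finset.mem_Icc]
    omega
  have hQi1 : i + 1 ∉ Q := by
    rw [hQ, Finset.mem_union, hB, hA, Finset.mem_Icc, Finset.mem_Icc]
    omega
  have hBcard : B.card = i - 1 := by rw [hB, Nat.card_Icc]; omega
  have hAcard : A.card = N - i - 1 := by rw [hA, Nat.card_Icc]; omega
  have hEi : (Finset.Icc 1 N).erase i = insert (i+1) Q := by
    ext x
    simp only [Finset.mem_erase, Finset.mem_Icc, Finset.mem_insert, hQ, hB, hA,
      Finset.mem_union]
    omega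
  have hEi1 : (Finset.Icc 1 N).erase (i+1) = insert i Q := by
    ext x
    simp only [Finset.mem_erase, Finset.mem_Icc, Finset.mem_insert, hQ, hB, hA,
      Finset.mem_union]
    omega
  set w : ℕ → ℝ := fun s => 1 / ((N-1).choose s : ℝ) with hw
  rw [shapley, shapley, hPcard, hEi, hEi1]
  rw [Finset.sum_powerset_insert hQi1, Finset.sum_powerset_insert hQi]
  have hcards : ∀ T ∈ Q.powerset, ∀ a, a ∉ Q → (insert a T).card = T.card + 1 := by
    intro T hT a ha
    rw [Finset.mem_powerset] at hT
    exact Finset.card_insert_of_notMem (fun h => ha (hT h))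
  -- combine into a single sum
  rw [← mul_sub, ← Finset.sum_add_distrib, ← Finset.sum_add_distrib,
    ← Finset.sum_sub_distrib]
  have key : ∀ T ∈ Q.powerset,
      (w T.card * (ν (insert i T) - ν T) +
        w (insert (i+1) T).card * (ν (insert i (insert (i+1) T)) - ν (insert (i+1) T))) -
      (w T.card * (ν (insert (i+1) T) - ν T) +
        w (insert i T).card * (ν (insert (i+1) (insert i T)) - ν (insert i T))) =
      (w T.card + w (T.card + 1)) *
        (if (T.filter (· < i)).card < K then dχ / K else 0) := by
    intro T hT
    have hTi : i ∉ T := fun h => hQi ((Finset.mem_powerset.mp hT) h)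
    have hTi1 : i + 1 ∉ T := fun h => hQi1 ((Finset.mem_powerset.mp hT) h)
    rw [hcards T hT (i+1) hQi1, hcards T hT i hQi]
    rw [Finset.insert_comm i (i+1) T]
    have hp := knnUtil_pair K y ytest T i hTi hTi1
    rw [← hν, ← hdχ] at hp
    have : (w T.card * (ν (insert i T) - ν T) +
        w (T.card + 1) * (ν (insert (i+1) (insert i T)) - ν (insert (i+1) T))) -
      (w T.card * (ν (insert (i+1) T) - ν T) +
        w (T.card + 1) * (ν (insert (i+1) (insert i T)) - ν (insert i T))) =
      (w T.card + w (T.card + 1)) * (ν (insert i T) - ν (insert (i+1) T)) := by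
      ring
    rw [this, hp]
  rw [Finset.sum_congr rfl key]
  -- now evaluate the sum
  have split := sum_powerset_union B A
    (fun T => (w T.card + w (T.card + 1)) *
      (if (T.filter (· < i)).card < K then dχ / K else 0)) hBA
  rw [← hQ] at split
  rw [split]
  have inner : ∀ T ∈ B.powerset, ∑ U ∈ A.powerset,
      (w (T ∪ U).card + w ((T ∪ U).card + 1)) *
        (if ((T ∪ U).filter (· < i)).card < K then dχ / K else 0) =
      (if T.card < K then dχ / K else 0) * ((N:ℝ) / ((i:ℝ) * ((i-1).choose T.card))) := by
    intro T hT
    rw [Finset.mem_powerset] at hT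
    have hTle : T.card ≤ i - 1 := by
      have := Finset.card_le_card hT
      omega
    have hcongr : ∀ U ∈ A.powerset,
        (w (T ∪ U).card + w ((T ∪ U).card + 1)) *
          (if ((T ∪ U).filter (· < i)).card < K then dχ / K else 0) =
        ((w (T.card + U.card) + w (T.card + U.card + 1)) *
          (if T.card < K then dχ / K else 0)) := by
      intro U hU
      rw [Finset.mem_powerset] at hU
      have hdTU : Disjoint T U := hBA.mono hT hU
      have hcard : (T ∪ U).card = T.card + U.card := Finset.card_union_of_disjoint hdTU
      have hfilt : (T ∪ U).filter (· < i) = T := by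
        ext x
        simp only [Finset.mem_filter, Finset.mem_union]
        constructor
        · rintro ⟨hx | hx, hlt⟩
          · exact hx
          · have := hU hx
            rw [hA, Finset.mem_Icc] at this
            omega
        · intro hx
          have := hT hx
          rw [hB, Finset.mem_Icc] at this
          exact ⟨Or.inl hx, by omega⟩
      rw [hcard, hfilt]
    rw [Finset.sum_congr rfl hcongr]
    have happ := Finset.sum_powerset_apply_card
      (fun j => (w (T.card + j) + w (T.card + j + 1)) *
        (if T.card < K then dχ / K else 0)) (x := A)
    rw [happ, hAcard]
    have hrw : ∀ j ∈ range (N-i-1+1), ((N-i-1).choose j) •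
        ((w (T.card + j) + w (T.card + j + 1)) * (if T.card < K then dχ / K else 0)) =
        (((N-i-1).choose j : ℝ) *
          (1/((N-1).choose (T.card+j) : ℝ) + 1/((N-1).choose (T.card+j+1) : ℝ))) *
          (if T.card < K then dχ / K else 0) := by
      intro j _
      rw [nsmul_eq_mul, hw]
      ring
    rw [Finset.sum_congr rfl hrw, ← Finset.sum_mul,
      Dsum N i T.card h1 hiN hTle]
    ring
  rw [Finset.sum_congr rfl inner]
  have happ2 := Finset.sum_powerset_apply_card
    (fun m => (if m < K then dχ / K else 0) * ((N:ℝ) / ((i:ℝ) * ((i-1).choose m)))) (x := B)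
  rw [happ2, hBcard]
  have hrw2 : ∀ m ∈ range (i-1+1), ((i-1).choose m) •
      ((if m < K then dχ / K else 0) * ((N:ℝ) / ((i:ℝ) * ((i-1).choose m)))) =
      (if m < K then dχ / K * ((N:ℝ)/(i:ℝ)) else 0) := by
    intro m hm
    rw [Finset.mem_range] at hm
    have hpos : (0:ℝ) < ((i-1).choose m : ℝ) := by
      exact_mod_cast Nat.choose_pos (by omega)
    rw [nsmul_eq_mul]
    by_cases h : m < K
    · rw [if_pos h, if_pos h]
      field_simp
    · rw [if_neg h, if_neg h]
      ring
  rw [Finset.sum_congr rfl hrw2, show i - 1 + 1 = i from by omega, min_count]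
  have hN : (0:ℝ) < (N:ℝ) := by exact_mod_cast (by omega : 0 < N)
  have hi : (0:ℝ) < (i:ℝ) := by exact_mod_cast h1
  rw [Nat.min_comm i K]
  set c := ((K ⊓ i : ℕ) : ℝ) with hc
  have e : (1:ℝ)/N * (c * (dχ / K * ((N:ℝ)/(i:ℝ)))) =
      dχ / K * (c / (i:ℝ)) * ((N:ℝ)/N) := by ring
  rw [e, div_self hN.ne', mul_one]

/-- Truncating the Shapley recursion at `K* = max(K, ⌈1/ε⌉)` yields an
`(ε,0)`-approximation of the K-NN Shapley values, and the approximation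
preserves all Shapley-value differences below `K*`. -/
theorem knn_shapley_truncated_approx (N K : ℕ) (hK1 : 1 ≤ K) (hKN : K ≤ N)
    (y : ℕ → ℕ) (ytest : ℕ) (ε : ℝ) (hε : 0 < ε)
    (Kstar : ℕ) (hKstar : Kstar = max K ⌈1 / ε⌉₊) (hKsN : Kstar ≤ N)
    (shat : ℕ → ℝ)
    (hzero : ∀ i, Kstar ≤ i → i ≤ N → shat i = 0)
    (hrec : ∀ i, 1 ≤ i → i ≤ Kstar - 1 →
      shat i = shat (i + 1) +
        ((if y i = ytest then (1 : ℝ) else 0) -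
            (if y (i + 1) = ytest then (1 : ℝ) else 0)) / K *
          (min (K : ℝ) (i : ℝ) / i)) :
    (∀ i, 1 ≤ i → i ≤ N →
      |shat i - shapley (Finset.Icc 1 N) (knnUtil K y ytest) i| ≤ ε) ∧
    (∀ i, 1 ≤ i → i ≤ Kstar - 1 →
      shat i - shat (i + 1) =
        shapley (Finset.Icc 1 N) (knnUtil K y ytest) i -
          shapley (Finset.Icc 1 N) (knnUtil K y ytest) (i + 1)) := by
  set s : ℕ → ℝ := shapley (Finset.Icc 1 N) (knnUtil K y ytest) with hs
  have hKK : K ≤ Kstar := by rw [hKstar]; exact le_max_left _ _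
  have hK1' : 1 ≤ Kstar := le_trans hK1 hKK
  have hKs0 : (0:ℝ) < (Kstar:ℝ) := by exact_mod_cast hK1'
  have hεK : (1:ℝ)/(Kstar:ℝ) ≤ ε := by
    have hceil : (1/ε : ℝ) ≤ (⌈1/ε⌉₊ : ℝ) := Nat.le_ceil _
    have h2 : ((⌈1/ε⌉₊ : ℕ) : ℝ) ≤ (Kstar : ℝ) := by
      have : ⌈1/ε⌉₊ ≤ Kstar := by rw [hKstar]; exact le_max_right _ _
      exact_mod_cast this
    rw [div_le_iff₀ hKs0]
    have h3 : 1/ε ≤ (Kstar:ℝ) := le_trans hceil h2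
    rw [div_le_iff₀ hε] at h3
    linarith
  have hdiff : ∀ i, 1 ≤ i → i ≤ Kstar - 1 → shat i - shat (i+1) = s i - s (i+1) := by
    intro i hi hi'
    have hmin : ((min K i : ℕ) : ℝ) = min (K:ℝ) (i:ℝ) := by
      simp [Nat.cast_min]
    have hd := shapley_diff N K hK1 y ytest i hi (by omega)
    rw [← hs] at hd
    rw [hd, hmin, hrec i hi hi']
    ring
  have hbnd : ∀ i, Kstar ≤ i → i ≤ N → |s i| ≤ ε := by
    intro i hKi hiN
    have h1i : 1 ≤ i := le_trans hK1' hKi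
    have hb := shapley_bound N K hK1 y ytest i h1i hiN
    rw [← hs, min_eq_left (le_trans hKK hKi)] at hb
    have hKr : (0:ℝ) < (K:ℝ) := by exact_mod_cast hK1
    have hir : (0:ℝ) < (i:ℝ) := by exact_mod_cast h1i
    have heq : (K:ℝ)/((K:ℝ)*(i:ℝ)) = 1/(i:ℝ) := by
      field_simp
    rw [heq] at hb
    refine le_trans hb (le_trans ?_ hεK)
    have : (Kstar:ℝ) ≤ (i:ℝ) := by exact_mod_cast hKi
    exact one_div_le_one_div_of_le hKs0 this
  have hKstar_zero : shat Kstar = 0 := hzero Kstar le_rfl hKsN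
  constructor
  · intro i hi hiN
    by_cases hcase : Kstar ≤ i
    · rw [hzero i hcase hiN, zero_sub, abs_neg]
      exact hbnd i hcase hiN
    · push_neg at hcase
      have tele : ∀ d j, 1 ≤ j → j + d = Kstar → shat j - s j = shat Kstar - s Kstar := by
        intro d
        induction d with
        | zero =>
          intro j hj hjd
          have : j = Kstar := by omega
          rw [this]
        | succ d ih =>
          intro j hj hjd
          have h' := hdiff j hj (by omega)
          have : shat j - s j = shat (j+1) - s (j+1) := by linarith
          rw [this]
          exact ih (j+1) (by omega) (by omega)
      have := tele (Kstar - i) i hi (by omega)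
      rw [this, hKstar_zero, zero_sub, abs_neg]
      exact hbnd Kstar le_rfl hKsN
  · intro i hi hi'
    exact hdiff i hi hi'
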